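/- Let μ be the Lebesgue measure on [0,1] and define T : L¹(μ) → L¹(μ) by T(f)(w) = min{f(w)², 1/√w}. Then T satisfies the lattice Lipschitz condition |T(f)(w) − T(g)(w)| ≤ (2/√w)·|f(w) − g(w)| for a.e. w ∈ (0,1] and all f, g ∈ L¹(μ), but T is not Lipschitz continuous as a map between the normed spaces L¹(μ) and L¹(μ): with fₙ = n·χ_{[0,1/n⁴]}, the ratio ‖T(fₙ) − T(0)‖₁ / ‖fₙ − 0‖₁ is unbounded in n. -/

import Mathlib

open MeasureTheory Filter Set Topology

/-- The superposition operator `T(f)(w) = min {f(w)², 1/√w}`. -/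
noncomputable def Tsq (f : ℝ → ℝ) : ℝ → ℝ := fun w => min ((f w) ^ 2) (1 / Real.sqrt w)

lemma Tsq_zero : Tsq (fun _ => (0:ℝ)) = fun _ => (0:ℝ) := by
  funext w
  simp only [Tsq, ne_eq, OfNat.ofNat_ne_zero, not_false_eq_true, zero_pow]
  exact min_eq_left (by positivity)

lemma abs_min_sub_min (a b c : ℝ) : |min a c - min b c| ≤ |a - b| := by
  rcases le_total a c with h1 | h1 <;> rcases le_total b c with h2 | h2 <;>
    rw [abs_le] <;>
    constructor <;>
    simp only [min_eq_left, min_eq_right, h1, h2] <;>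
    nlinarith [le_abs_self (a-b), neg_abs_le (a-b)]

lemma key_lip (w x y : ℝ) (hw : w ∈ Set.Ioc (0:ℝ) 1) :
    |min (x^2) (1/Real.sqrt w) - min (y^2) (1/Real.sqrt w)| ≤ 2 / Real.sqrt w * |x - y| := by
  set c := Real.sqrt w with hcdef
  have hc : 0 < c := Real.sqrt_pos.2 hw.1
  have hc1 : c ≤ 1 := by
    rw [hcdef, show (1:ℝ) = Real.sqrt 1 by simp]
    exact Real.sqrt_le_sqrt hw.2
  have hinv1 : 1 ≤ 1 / c := by rw [le_div_iff₀ hc]; linarith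
  set s := Real.sqrt (1/c) with hsdef
  have hs0 : 0 ≤ s := Real.sqrt_nonneg _
  have hss : s ^ 2 = 1 / c := Real.sq_sqrt (by positivity)
  have hsle : s ≤ 1 / c := by
    have := Real.sqrt_le_sqrt (show (1/c) ≤ (1/c)^2 by nlinarith)
    rwa [Real.sqrt_sq (by positivity)] at this
  have hmin : ∀ z : ℝ, min (z^2) (1/c) = (min |z| s)^2 := by
    intro z
    rcases le_total |z| s with h | h
    · rw [min_eq_left h, min_eq_left, sq_abs]
      rw [← hss, ← sq_abs z]
      exact pow_le_pow_left₀ (abs_nonneg z) h 2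
    · rw [min_eq_right h, hss.symm, min_eq_right]
      rw [← sq_abs z]
      exact pow_le_pow_left₀ hs0 h 2
  rw [hmin x, hmin y]
  set a := min |x| s
  set b := min |y| s
  have ha : 0 ≤ a := le_min (abs_nonneg _) hs0
  have hb : 0 ≤ b := le_min (abs_nonneg _) hs0
  have has : a ≤ s := min_le_right _ _
  have hbs : b ≤ s := min_le_right _ _
  have hab : |a - b| ≤ |x - y| :=
    le_trans (abs_min_sub_min _ _ _) (abs_abs_sub_abs_le_abs_sub x y)
  calc |a^2 - b^2| = |a - b| * |a + b| := by rw [← abs_mul]; ring_nf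
    _ ≤ |x - y| * (2 * s) := by
        apply mul_le_mul hab _ (abs_nonneg _) (abs_nonneg _)
        rw [abs_of_nonneg (by linarith)]; linarith
    _ ≤ |x - y| * (2 * (1/c)) := by
        apply mul_le_mul_of_nonneg_left (by linarith) (abs_nonneg _)
    _ = 2 / c * |x - y| := by ring

lemma ae_Ioc : ∀ᵐ w ∂(volume.restrict (Set.Icc (0:ℝ) 1)), w ∈ Set.Ioc (0:ℝ) 1 := by
  rw [ae_iff]
  have hset : {a : ℝ | ¬ a ∈ Set.Ioc (0:ℝ) 1} = (Set.Ioc (0:ℝ) 1)ᶜ := rfl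
  rw [hset, Measure.restrict_apply measurableSet_Ioc.compl]
  apply measure_mono_null (t := {(0:ℝ)})
  · intro w hw
    simp only [Set.mem_inter_iff, Set.mem_compl_iff, Set.mem_Ioc, Set.mem_Icc,
      not_and_or, not_lt, not_le] at hw
    rcases hw.1 with h | h
    · exact le_antisymm h hw.2.1
    · exact absurd hw.2.2 (not_le.2 h)
  · exact measure_singleton 0

theorem stmt19 :
    (∀ f : ℝ → ℝ, Measurable f →
      Integrable (Tsq f) (volume.restrict (Set.Icc (0:ℝ) 1))) ∧
    (∀ f g : ℝ → ℝ, ∀ᵐ w ∂(volume.restrict (Set.Icc (0:ℝ) 1)),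
      |Tsq f w - Tsq g w| ≤ (2 / Real.sqrt w) * |f w - g w|) ∧
    (∀ C : ℝ, ∃ n : ℕ,
      ENNReal.ofReal C *
          eLpNorm (fun w => Set.indicator (Set.Icc (0:ℝ) (((n:ℝ))^4)⁻¹)
            (fun _ => (n : ℝ)) w) 1 (volume.restrict (Set.Icc (0:ℝ) 1)) <
        eLpNorm (Tsq (fun w => Set.indicator (Set.Icc (0:ℝ) (((n:ℝ))^4)⁻¹)
            (fun _ => (n : ℝ)) w) - Tsq (fun _ => (0:ℝ))) 1
          (volume.restrict (Set.Icc (0:ℝ) 1))) := by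
  refine ⟨?_, ?_, ?_⟩
  · -- integrability
    intro f hf
    have hmeas : Measurable (Tsq f) :=
      (hf.pow_const 2).min (measurable_const.div Real.continuous_sqrt.measurable)
    have hmaj : IntegrableOn (fun w : ℝ => w ^ (-(1/2) : ℝ)) (Set.Icc (0:ℝ) 1) := by
      rw [integrableOn_Icc_iff_integrableOn_Ioc]
      have h := intervalIntegral.intervalIntegrable_rpow' (a := 0) (b := 1)
        (r := -(1/2)) (by norm_num)
      rwa [intervalIntegrable_iff_integrableOn_Ioc_of_le (by norm_num)] at h
    apply Integrable.mono hmaj hmeas.aestronglyMeasurable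
    filter_upwards [ae_Ioc] with w hw
    have hc : 0 < Real.sqrt w := Real.sqrt_pos.2 hw.1
    have h0 : 0 ≤ Tsq f w := le_min (sq_nonneg _) (by positivity)
    have h1 : Tsq f w ≤ 1 / Real.sqrt w := min_le_right _ _
    have hr : w ^ (-(1/2) : ℝ) = 1 / Real.sqrt w := by
      rw [Real.rpow_neg hw.1.le, ← Real.sqrt_eq_rpow, one_div]
    rw [Real.norm_eq_abs, Real.norm_eq_abs, abs_of_nonneg h0, hr,
      abs_of_nonneg (by positivity)]
    exact h1
  · -- lattice Lipschitz
    intro f g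
    filter_upwards [ae_Ioc] with w hw
    exact key_lip w (f w) (g w) hw
  · -- not Lipschitz
    intro C
    refine ⟨⌈C⌉₊ + 1, ?_⟩
    set n : ℕ := ⌈C⌉₊ + 1 with hn
    have hn1 : (1:ℝ) ≤ (n:ℝ) := by exact_mod_cast Nat.le_add_left 1 ⌈C⌉₊
    have hCn : C < (n:ℝ) := lt_of_le_of_lt (Nat.le_ceil C) (by exact_mod_cast Nat.lt_succ_self _)
    have hn0 : (0:ℝ) < (n:ℝ) := by linarith
    have hn4 : (0:ℝ) < ((n:ℝ))^4 := by positivity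
    have hle1 : (((n:ℝ))^4)⁻¹ ≤ 1 := by
      rw [inv_le_one_iff₀]; right; exact one_le_pow₀ hn1
    set S : Set ℝ := Set.Icc (0:ℝ) (((n:ℝ))^4)⁻¹ with hS
    -- LHS bound
    have hvolS : volume S = ENNReal.ofReal ((((n:ℝ))^4)⁻¹) := by
      rw [hS, Real.volume_Icc, sub_zero]
    have hL : eLpNorm (fun w => S.indicator (fun _ => (n:ℝ)) w) 1
        (volume.restrict (Set.Icc (0:ℝ) 1)) ≤ ENNReal.ofReal ((n:ℝ) * (((n:ℝ))^4)⁻¹) := by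
      refine le_trans (eLpNorm_mono_measure _ Measure.restrict_le_self) (le_of_eq ?_)
      rw [show (fun w => S.indicator (fun _ => (n:ℝ)) w) = S.indicator (fun _ => (n:ℝ)) from rfl,
        eLpNorm_indicator_const measurableSet_Icc one_ne_zero ENNReal.one_ne_top, hvolS]
      simp only [ENNReal.toReal_one, one_div, inv_one, ENNReal.rpow_one]
      rw [Real.enorm_eq_ofReal hn0.le, ← ENNReal.ofReal_mul hn0.le]
    -- RHS bound
    set In : Set ℝ := Set.Ioc (0:ℝ) (((n:ℝ))^4)⁻¹ with hIn
    have hInsub : In ⊆ Set.Icc (0:ℝ) 1 := fun w hw => ⟨hw.1.le, hw.2.trans hle1⟩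
    have hg : ∀ w ∈ In,
        ‖(Tsq (fun w => S.indicator (fun _ => (n:ℝ)) w) - Tsq (fun _ => (0:ℝ))) w‖₊
          = (ENNReal.ofReal (((n:ℝ))^2) : ENNReal) := by
      intro w hw
      have hwpos : 0 < w := hw.1
      have hsq : Real.sqrt w ≤ ((n:ℝ)^2)⁻¹ := by
        have h1 : Real.sqrt w ≤ Real.sqrt ((((n:ℝ))^4)⁻¹) := Real.sqrt_le_sqrt hw.2
        have h2 : Real.sqrt ((((n:ℝ))^4)⁻¹) = ((n:ℝ)^2)⁻¹ := by
          rw [Real.sqrt_inv, show ((n:ℝ))^4 = ((n:ℝ)^2)^2 by ring,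
            Real.sqrt_sq (by positivity)]
        rwa [h2] at h1
      have hsqpos : 0 < Real.sqrt w := Real.sqrt_pos.2 hwpos
      have hmin : (n:ℝ)^2 ≤ 1 / Real.sqrt w := by
        rw [le_div_iff₀ hsqpos]
        calc (n:ℝ)^2 * Real.sqrt w ≤ (n:ℝ)^2 * ((n:ℝ)^2)⁻¹ := by
              apply mul_le_mul_of_nonneg_left hsq (by positivity)
          _ = 1 := by field_simp
      have hindw : S.indicator (fun _ => (n:ℝ)) w = (n:ℝ) :=
        Set.indicator_of_mem (show w ∈ S from Set.mem_Icc.2 ⟨hwpos.le, hw.2⟩) _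
      have hTval : Tsq (fun w => S.indicator (fun _ => (n:ℝ)) w) w = (n:ℝ)^2 := by
        simp only [Tsq, hindw]
        exact min_eq_left hmin
      rw [Pi.sub_apply, hTval, Tsq_zero, sub_zero,
        ← enorm_eq_nnnorm, Real.enorm_eq_ofReal (by positivity)]
    have hR : ENNReal.ofReal (((n:ℝ))^2 * (((n:ℝ))^4)⁻¹) ≤
        eLpNorm (Tsq (fun w => S.indicator (fun _ => (n:ℝ)) w) - Tsq (fun _ => (0:ℝ))) 1
          (volume.restrict (Set.Icc (0:ℝ) 1)) := by
      rw [eLpNorm_one_eq_lintegral_enorm]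
      calc ENNReal.ofReal (((n:ℝ))^2 * (((n:ℝ))^4)⁻¹)
          = ENNReal.ofReal (((n:ℝ))^2) * volume In := by
            rw [hIn, Real.volume_Ioc, sub_zero, ← ENNReal.ofReal_mul (by positivity)]
        _ = ∫⁻ w in In, ENNReal.ofReal (((n:ℝ))^2) := by
            rw [setLIntegral_const, mul_comm]
        _ = ∫⁻ w in In,
            ‖(Tsq (fun w => S.indicator (fun _ => (n:ℝ)) w) - Tsq (fun _ => (0:ℝ))) w‖₊ := by
            refine (setLIntegral_congr_fun measurableSet_Ioc ?_).symm
            exact (fun w hw => hg w hw)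
        _ ≤ ∫⁻ w in Set.Icc (0:ℝ) 1,
            ‖(Tsq (fun w => S.indicator (fun _ => (n:ℝ)) w) - Tsq (fun _ => (0:ℝ))) w‖₊ :=
            lintegral_mono' (Measure.restrict_mono hInsub le_rfl) le_rfl
    -- combine
    calc ENNReal.ofReal C * eLpNorm (fun w => S.indicator (fun _ => (n:ℝ)) w) 1
          (volume.restrict (Set.Icc (0:ℝ) 1))
        ≤ ENNReal.ofReal C * ENNReal.ofReal ((n:ℝ) * (((n:ℝ))^4)⁻¹) :=
          mul_le_mul_right hL _
      _ < ENNReal.ofReal (((n:ℝ))^2 * (((n:ℝ))^4)⁻¹) := by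
          rcases le_or_gt C 0 with hC | hC
          · rw [ENNReal.ofReal_eq_zero.2 hC, zero_mul]
            apply ENNReal.ofReal_pos.2
            positivity
          · rw [← ENNReal.ofReal_mul hC.le]
            apply ENNReal.ofReal_lt_ofReal_iff_of_nonneg (by positivity) |>.2
            have hp : (0:ℝ) < (n:ℝ) * (((n:ℝ))^4)⁻¹ := by positivity
            nlinarith [mul_lt_mul_of_pos_right hCn hp]
      _ ≤ _ := hR
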